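/- Let α ∈ (0, π/2), Δ = Δ(α) and let {T_t}_{t∈Δ} be a C₀-semigroup on a Banach space X. If x₀ ∈ X is a distributionally irregular vector, then for every t₀ ∈ Δ the vector T_{t₀} x₀ is also distributionally irregular; that is, the set of distributionally irregular vectors is invariant under every operator of the semigroup. -/

import Mathlib

open MeasureTheory Filter Set

noncomputable section

/-- The complex sector `Δ(α) = {r e^{iθ} : r ≥ 0, |θ| ≤ α}`. -/
def sector (α : ℝ) : Set ℂ := {z : ℂ | |Complex.arg z| ≤ α}

/-- `Δ_r = {t ∈ Δ(α) : |t| < r}`. -/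
def sectorBall (α r : ℝ) : Set ℂ := {z ∈ sector α | ‖z‖ < r}

/-- Upper density of a set `A` with respect to the sector `Δ(α)`. -/
def udens (α : ℝ) (A : Set ℂ) : ℝ :=
  limsup (fun r : ℝ =>
    (volume (A ∩ sectorBall α r)).toReal / (volume (sectorBall α r)).toReal) atTop

/-- Lower density of a set `A` with respect to the sector `Δ(α)`. -/
def ldens (α : ℝ) (A : Set ℂ) : ℝ :=
  liminf (fun r : ℝ =>
    (volume (A ∩ sectorBall α r)).toReal / (volume (sectorBall α r)).toReal) atTop

/-- The filter expressing `|t| → ∞` along `t ∈ A`. -/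
def alongAbs (A : Set ℂ) : Filter ℂ :=
  (atTop.comap (fun z : ℂ => ‖z‖)) ⊓ 𝓟 A

/-- A `C₀`-semigroup of continuous linear operators indexed by the sector `Δ(α)`. -/
structure CZeroSemigroup (α : ℝ) (𝕜 X : Type*) [NontriviallyNormedField 𝕜]
    [NormedAddCommGroup X] [NormedSpace 𝕜 X] where
  T : ℂ → X →L[𝕜] X
  map_zero' : T 0 = ContinuousLinearMap.id 𝕜 X
  map_add' : ∀ s ∈ sector α, ∀ t ∈ sector α, T (s + t) = (T s).comp (T t)
  cont' : ∀ x : X, ContinuousOn (fun t => T t x) (sector α)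

variable {α : ℝ} {𝕜 X : Type*} [NontriviallyNormedField 𝕜]
  [NormedAddCommGroup X] [NormedSpace 𝕜 X]

/-- Distributional sensitivity. -/
def DistSensitive (S : CZeroSemigroup α 𝕜 X) : Prop :=
  ∃ δ > (0:ℝ), ∀ x : X, ∀ ε > (0:ℝ), ∃ y : X, ‖x - y‖ < ε ∧
    udens α {t ∈ sector α | δ < ‖S.T t x - S.T t y‖} = 1

/-- Distributionally unbounded vector. -/
def DistUnbounded (S : CZeroSemigroup α 𝕜 X) (x : X) : Prop :=
  ∃ A : Set ℂ, A ⊆ sector α ∧ MeasurableSet A ∧ udens α A = 1 ∧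
    Tendsto (fun t => ‖S.T t x‖) (alongAbs A) atTop

/-- Distributionally semi-irregular vector. -/
def DistSemiIrregular (S : CZeroSemigroup α 𝕜 X) (x : X) : Prop :=
  ∃ A B : Set ℂ, A ⊆ sector α ∧ B ⊆ sector α ∧ MeasurableSet A ∧ MeasurableSet B ∧
    udens α A = 1 ∧ udens α B = 1 ∧
    Tendsto (fun t => ‖S.T t x‖) (alongAbs A) (nhds 0) ∧
    ∃ δ > (0:ℝ), ∀ t ∈ B, δ ≤ ‖S.T t x‖

/-- Distributionally irregular vector. -/
def DistIrregular (S : CZeroSemigroup α 𝕜 X) (x : X) : Prop :=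
  ∃ A B : Set ℂ, A ⊆ sector α ∧ B ⊆ sector α ∧ MeasurableSet A ∧ MeasurableSet B ∧
    udens α A = 1 ∧ udens α B = 1 ∧
    Tendsto (fun t => ‖S.T t x‖) (alongAbs A) (nhds 0) ∧
    Tendsto (fun t => ‖S.T t x‖) (alongAbs B) atTop

/-- Distributionally chaotic pair. -/
def DistChaoticPair (S : CZeroSemigroup α 𝕜 X) (x y : X) : Prop :=
  ∃ δ > (0:ℝ), ∀ ε > (0:ℝ),
    udens α {t ∈ sector α | ‖S.T t x - S.T t y‖ < ε} = 1 ∧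
    udens α {t ∈ sector α | δ < ‖S.T t x - S.T t y‖} = 1

/-- Distributionally scrambled set. -/
def DistScrambled (S : CZeroSemigroup α 𝕜 X) (K : Set X) : Prop :=
  ∀ x ∈ K, ∀ y ∈ K, x ≠ y → DistChaoticPair S x y

section Stmt6Aux

open Pointwise Topology

lemma Stmt6.mem_sector_iff {α : ℝ} (hα : 0 ≤ α) (hα' : α < Real.pi / 2) {z : ℂ} :
    z ∈ sector α ↔ 0 ≤ z.re ∧ |z.im| ≤ z.re * Real.tan α := by
  constructor
  · intro hz
    by_cases h0 : z = 0
    · simp [h0, mul_comm]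
    have habs : |Complex.arg z| < Real.pi / 2 := lt_of_le_of_lt hz hα'
    have hre : 0 < z.re := by
      rcases Complex.abs_arg_lt_pi_div_two_iff.1 habs with h | h
      · exact h
      · exact absurd h h0
    have harg : Complex.arg z ∈ Ioo (-(Real.pi/2)) (Real.pi/2) := abs_lt.1 habs
    have hmem₁ : α ∈ Ioo (-(Real.pi/2)) (Real.pi/2) := ⟨by linarith [Real.pi_div_two_pos], hα'⟩
    have hmem₂ : -α ∈ Ioo (-(Real.pi/2)) (Real.pi/2) := ⟨by linarith, by linarith [Real.pi_div_two_pos]⟩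
    have h1 : Real.tan (Complex.arg z) ≤ Real.tan α :=
      Real.strictMonoOn_tan.monotoneOn harg hmem₁ (abs_le.1 hz).2
    have h2 : -Real.tan α ≤ Real.tan (Complex.arg z) := by
      have := Real.strictMonoOn_tan.monotoneOn hmem₂ harg (abs_le.1 hz).1
      rwa [Real.tan_neg] at this
    have htan : Real.tan (Complex.arg z) = z.im / z.re := Complex.tan_arg z
    refine ⟨hre.le, ?_⟩
    have him : z.im = z.re * Real.tan (Complex.arg z) := by
      rw [htan]; field_simp
    rw [him, abs_mul, abs_of_pos hre]
    exact mul_le_mul_of_nonneg_left (abs_le.2 ⟨h2, h1⟩) hre.le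
  · rintro ⟨hre, him⟩
    by_cases h0 : z = 0
    · simp [sector, h0, Complex.arg_zero, hα]
    have hre' : 0 < z.re := by
      rcases lt_or_eq_of_le hre with h | h
      · exact h
      · exfalso
        have htan0 : 0 ≤ Real.tan α := by
          rcases lt_or_eq_of_le hα with h' | h'
          · exact (Real.tan_pos_of_pos_of_lt_pi_div_two h' hα').le
          · simp [← h']
        have : |z.im| ≤ 0 := by nlinarith [him]
        exact h0 (Complex.ext h.symm (abs_nonpos_iff.1 this))
    have habs : |Complex.arg z| < Real.pi / 2 :=
      Complex.abs_arg_lt_pi_div_two_iff.2 (Or.inl hre')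
    have harg := abs_lt.1 habs
    have htan : Real.tan (Complex.arg z) = z.im / z.re := Complex.tan_arg z
    have hb : |Real.tan (Complex.arg z)| ≤ Real.tan α := by
      rw [htan, abs_div, abs_of_pos hre', div_le_iff₀ hre']
      calc |z.im| ≤ z.re * Real.tan α := him
        _ = Real.tan α * z.re := mul_comm _ _
    rw [sector, mem_setOf_eq, abs_le]
    constructor
    · by_contra h
      push_neg at h
      have h' := Real.tan_lt_tan_of_lt_of_lt_pi_div_two harg.1 (by linarith : -α < Real.pi/2) h
      rw [Real.tan_neg] at h'
      have := (abs_le.1 hb).1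
      linarith
    · by_contra h
      push_neg at h
      have h' := Real.tan_lt_tan_of_lt_of_lt_pi_div_two (by linarith : -(Real.pi/2) < α) harg.2 h
      have := (abs_le.1 hb).2
      linarith

lemma Stmt6.sector_add {α : ℝ} (hα : 0 ≤ α) (hα' : α < Real.pi / 2) {z w : ℂ}
    (hz : z ∈ sector α) (hw : w ∈ sector α) : z + w ∈ sector α := by
  rw [Stmt6.mem_sector_iff hα hα'] at *
  obtain ⟨h1, h2⟩ := hz
  obtain ⟨h3, h4⟩ := hw
  refine ⟨by simpa using add_nonneg h1 h3, ?_⟩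
  calc |(z+w).im| = |z.im + w.im| := by simp
    _ ≤ |z.im| + |w.im| := abs_add_le _ _
    _ ≤ z.re * Real.tan α + w.re * Real.tan α := add_le_add h2 h4
    _ = (z+w).re * Real.tan α := by simp [add_mul]

lemma Stmt6.measurableSet_sector {α : ℝ} : MeasurableSet (sector α) :=
  Complex.measurable_arg.abs measurableSet_Iic

lemma Stmt6.measurableSet_sectorBall {α r : ℝ} : MeasurableSet (sectorBall α r) :=
  Stmt6.measurableSet_sector.inter (continuous_norm.measurable measurableSet_Iio)

lemma Stmt6.sectorBall_smul {α : ℝ} {r : ℝ} (hr : 0 < r) :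
    sectorBall α r = r • sectorBall α 1 := by
  ext z
  rw [Set.mem_smul_set_iff_inv_smul_mem₀ hr.ne']
  simp only [sectorBall, sector, mem_setOf_eq, Complex.real_smul, norm_mul,
    Complex.norm_real, Real.norm_eq_abs, Complex.arg_real_mul _ (inv_pos.2 hr),
    abs_of_pos (inv_pos.2 hr)]
  rw [inv_mul_lt_one₀ hr]

lemma Stmt6.volume_sectorBall {α : ℝ} {r : ℝ} (hr : 0 < r) :
    volume (sectorBall α r) = ENNReal.ofReal (r ^ 2) * volume (sectorBall α 1) := by
  rw [Stmt6.sectorBall_smul hr, Measure.addHaar_smul, Complex.finrank_real_complex,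
    abs_of_nonneg (by positivity : (0:ℝ) ≤ r ^ 2)]

lemma Stmt6.sectorBall_subset_ball {α r : ℝ} : sectorBall α r ⊆ Metric.ball 0 r := by
  intro z hz
  simpa [Metric.mem_ball, Complex.dist_eq] using hz.2

lemma Stmt6.volume_sectorBall_lt_top {α r : ℝ} : volume (sectorBall α r) < ⊤ :=
  lt_of_le_of_lt (measure_mono Stmt6.sectorBall_subset_ball) measure_ball_lt_top

lemma Stmt6.volume_inter_ne_top {α : ℝ} (D : Set ℂ) (r : ℝ) :
    volume (D ∩ sectorBall α r) ≠ ⊤ :=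
  ((measure_mono inter_subset_right).trans_lt Stmt6.volume_sectorBall_lt_top).ne

lemma Stmt6.volume_sectorBall_one_pos {α : ℝ} (hα : 0 < α) (hα' : α < Real.pi / 2) :
    0 < volume (sectorBall α 1) := by
  have htan : 0 < Real.tan α := Real.tan_pos_of_pos_of_lt_pi_div_two hα hα'
  set δ : ℝ := min 4⁻¹ (4⁻¹ * Real.tan α) with hδdef
  have hδ : 0 < δ := lt_min (by norm_num) (by positivity)
  have hsub : Metric.ball (2⁻¹ : ℂ) δ ⊆ sectorBall α 1 := by
    intro z hz
    rw [Metric.mem_ball, Complex.dist_eq] at hz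
    have hre : |z.re - 2⁻¹| ≤ ‖z - 2⁻¹‖ := by
      simpa using Complex.abs_re_le_norm (z - 2⁻¹)
    have him : |z.im| ≤ ‖z - 2⁻¹‖ := by
      simpa using Complex.abs_im_le_norm (z - 2⁻¹)
    have hδ1 : δ ≤ 4⁻¹ := min_le_left _ _
    have hδ2 : δ ≤ 4⁻¹ * Real.tan α := min_le_right _ _
    have hre' : (4:ℝ)⁻¹ ≤ z.re := by
      have := (abs_le.1 hre).1; linarith
    constructor
    · rw [Stmt6.mem_sector_iff hα.le hα']
      refine ⟨by linarith, ?_⟩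
      calc |z.im| ≤ δ := le_of_lt (lt_of_le_of_lt him hz)
        _ ≤ 4⁻¹ * Real.tan α := hδ2
        _ ≤ z.re * Real.tan α := by nlinarith
    · calc ‖z‖ = ‖z - 2⁻¹ + 2⁻¹‖ := by ring_nf
        _ ≤ ‖z - 2⁻¹‖ + ‖(2⁻¹ : ℂ)‖ := norm_add_le _ _
        _ < δ + 2⁻¹ := by simp; linarith [hz]
        _ ≤ 1 := by norm_num; linarith
  calc (0:ENNReal) < volume (Metric.ball (2⁻¹:ℂ) δ) := Metric.measure_ball_pos volume _ hδ
    _ ≤ _ := measure_mono hsub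

lemma Stmt6.udens_preimage_add {α : ℝ} (hα : 0 < α) (hα' : α < Real.pi / 2) {t₀ : ℂ}
    (ht₀ : t₀ ∈ sector α) {B : Set ℂ} (hubB : udens α B = 1) :
    udens α ((fun z => z + t₀) ⁻¹' B ∩ sector α) = 1 := by
  set c := ‖t₀‖ with hc
  have hc0 : 0 ≤ c := norm_nonneg t₀
  set B' := (fun z => z + t₀) ⁻¹' B ∩ sector α with hB'
  have hV1pos : 0 < (volume (sectorBall α 1)).toReal :=
    ENNReal.toReal_pos (Stmt6.volume_sectorBall_one_pos hα hα').ne'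
      Stmt6.volume_sectorBall_lt_top.ne
  have hVtoReal : ∀ r : ℝ, 0 < r →
      (volume (sectorBall α r)).toReal = r^2 * (volume (sectorBall α 1)).toReal := by
    intro r hr
    rw [Stmt6.volume_sectorBall hr, ENNReal.toReal_mul, ENNReal.toReal_ofReal (by positivity)]
  have hVpos : ∀ r : ℝ, 0 < r → 0 < (volume (sectorBall α r)).toReal := by
    intro r hr
    rw [hVtoReal r hr]; positivity
  have hnn : ∀ (D : Set ℂ) (r : ℝ),
      0 ≤ (volume (D ∩ sectorBall α r)).toReal / (volume (sectorBall α r)).toReal := by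
    intro D r; positivity
  have hle1 : ∀ (D : Set ℂ) (r : ℝ), 0 < r →
      (volume (D ∩ sectorBall α r)).toReal / (volume (sectorBall α r)).toReal ≤ 1 := by
    intro D r hr
    rw [div_le_one (hVpos r hr)]
    exact ENNReal.toReal_mono Stmt6.volume_sectorBall_lt_top.ne (measure_mono inter_subset_right)
  -- key measure estimate
  have key : ∀ r : ℝ, 0 < r →
      (volume (B ∩ sectorBall α (r + c))).toReal ≤
        (volume (B' ∩ sectorBall α r)).toReal +
        ((volume (sectorBall α (r+c))).toReal - (volume (sectorBall α r)).toReal) := by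
    intro r hr
    set S : Set ℂ := (fun z => z - t₀) ⁻¹' (sectorBall α r) with hS
    have hSmeas : MeasurableSet S :=
      Stmt6.measurableSet_sectorBall.preimage (measurable_id.sub_const t₀)
    have hSsub : S ⊆ sectorBall α (r + c) := by
      intro z hz
      have h1 : z - t₀ ∈ sectorBall α r := hz
      have h2 : z = (z - t₀) + t₀ := by ring
      constructor
      · rw [show z = (z - t₀) + t₀ by ring]
        exact Stmt6.sector_add hα.le hα' h1.1 ht₀
      · calc ‖z‖ = ‖(z - t₀) + t₀‖ := by rw [← h2]
          _ ≤ ‖z - t₀‖ + c := norm_add_le _ _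
          _ < r + c := by linarith [h1.2]
    have hSvol : volume S = volume (sectorBall α r) := by
      rw [hS]
      simp_rw [sub_eq_add_neg]
      exact measure_preimage_add_right volume (-t₀) _
    have hkey : B' ∩ sectorBall α r = (fun z => z + t₀) ⁻¹' (B ∩ S) := by
      ext z
      simp only [hB', hS, mem_inter_iff, mem_preimage, add_sub_cancel_right]
      constructor
      · rintro ⟨⟨h1, _⟩, h3⟩; exact ⟨h1, h3⟩
      · rintro ⟨h1, h3⟩; exact ⟨⟨h1, h3.1⟩, h3⟩
    have hvol1 : volume (B' ∩ sectorBall α r) = volume (B ∩ S) := by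
      rw [hkey]; exact measure_preimage_add_right volume t₀ _
    have hcover : B ∩ sectorBall α (r+c) ⊆ (B ∩ S) ∪ (sectorBall α (r+c) \ S) := by
      rintro z ⟨hzB, hz⟩
      by_cases hzS : z ∈ S
      · exact Or.inl ⟨hzB, hzS⟩
      · exact Or.inr ⟨hz, hzS⟩
    have hsub2 : volume (B ∩ sectorBall α (r+c)) ≤
        volume (B ∩ S) + volume (sectorBall α (r+c) \ S) :=
      le_trans (measure_mono hcover) (measure_union_le _ _)
    have hdiff : volume (sectorBall α (r+c) \ S) =
        volume (sectorBall α (r+c)) - volume S :=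
      measure_diff hSsub hSmeas.nullMeasurableSet
        (by rw [hSvol]; exact Stmt6.volume_sectorBall_lt_top.ne)
    rw [hdiff, hSvol, ← hvol1] at hsub2
    have hmono : sectorBall α r ⊆ sectorBall α (r+c) := fun z hz => ⟨hz.1, by linarith [hz.2]⟩
    have hed : volume (sectorBall α r) ≤ volume (sectorBall α (r+c)) := measure_mono hmono
    have hfin : volume (sectorBall α (r+c)) ≠ ⊤ := Stmt6.volume_sectorBall_lt_top.ne
    have hfin2 : volume (B' ∩ sectorBall α r) ≠ ⊤ := Stmt6.volume_inter_ne_top _ _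
    have h2fin : volume (sectorBall α (r+c)) - volume (sectorBall α r) ≠ ⊤ :=
      (lt_of_le_of_lt tsub_le_self Stmt6.volume_sectorBall_lt_top).ne
    have := ENNReal.toReal_mono (ENNReal.add_ne_top.2 ⟨hfin2, h2fin⟩) hsub2
    rwa [ENNReal.toReal_add hfin2 h2fin, ENNReal.toReal_sub_of_le hed hfin] at this
  -- pointwise density bound
  have pointwise : ∀ r : ℝ, 0 < r →
      1 + ((r+c)/r)^2 *
        ((volume (B ∩ sectorBall α (r+c))).toReal / (volume (sectorBall α (r+c))).toReal - 1)
      ≤ (volume (B' ∩ sectorBall α r)).toReal / (volume (sectorBall α r)).toReal := by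
    intro r hr
    have hrc : 0 < r + c := by linarith
    have hVr := hVtoReal r hr
    have hVrc := hVtoReal (r+c) hrc
    have hVrpos := hVpos r hr
    have hVrcpos := hVpos (r+c) hrc
    rw [le_div_iff₀ hVrpos]
    have hNrc : (volume (B ∩ sectorBall α (r+c))).toReal
        = ((volume (B ∩ sectorBall α (r+c))).toReal / (volume (sectorBall α (r+c))).toReal)
            * (volume (sectorBall α (r+c))).toReal := by
      field_simp
    have hq : ((r+c)/r)^2 * (volume (sectorBall α r)).toReal
        = (volume (sectorBall α (r+c))).toReal := by
      rw [hVr, hVrc, div_pow]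
      field_simp
    have e1 : (1 + ((r+c)/r)^2 *
        ((volume (B ∩ sectorBall α (r+c))).toReal / (volume (sectorBall α (r+c))).toReal - 1))
          * (volume (sectorBall α r)).toReal
        = (volume (sectorBall α r)).toReal
          + (((r+c)/r)^2 * (volume (sectorBall α r)).toReal)
            * ((volume (B ∩ sectorBall α (r+c))).toReal / (volume (sectorBall α (r+c))).toReal)
          - ((r+c)/r)^2 * (volume (sectorBall α r)).toReal := by ring
    rw [e1, hq]
    have e2 : (volume (sectorBall α (r+c))).toReal *
        ((volume (B ∩ sectorBall α (r+c))).toReal / (volume (sectorBall α (r+c))).toReal)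
        = (volume (B ∩ sectorBall α (r+c))).toReal := by
      field_simp
    rw [e2]
    linarith [key r hr]
  -- limsup bookkeeping
  have hcoboundB' : IsCoboundedUnder (· ≤ ·) atTop
      (fun r => (volume (B' ∩ sectorBall α r)).toReal / (volume (sectorBall α r)).toReal) :=
    isCoboundedUnder_le_of_le atTop (fun r => hnn B' r)
  have hcoboundB : IsCoboundedUnder (· ≤ ·) atTop
      (fun r => (volume (B ∩ sectorBall α r)).toReal / (volume (sectorBall α r)).toReal) :=
    isCoboundedUnder_le_of_le atTop (fun r => hnn B r)
  have hbddB' : IsBoundedUnder (· ≤ ·) atTop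
      (fun r => (volume (B' ∩ sectorBall α r)).toReal / (volume (sectorBall α r)).toReal) := by
    apply isBoundedUnder_of_eventually_le (a := (1:ℝ))
    filter_upwards [eventually_gt_atTop (0:ℝ)] with r hr
    exact hle1 B' r hr
  apply le_antisymm
  · apply limsup_le_of_le hcoboundB'
    filter_upwards [eventually_gt_atTop (0:ℝ)] with r hr
    exact hle1 B' r hr
  · apply le_of_forall_sub_le
    intro ε hε
    have h1lt : 1 - ε/2 < udens α B := by rw [hubB]; linarith
    have hfreq : ∃ᶠ r in atTop, 1 - ε/2 <
        (volume (B ∩ sectorBall α r)).toReal / (volume (sectorBall α r)).toReal :=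
      frequently_lt_of_lt_limsup hcoboundB h1lt
    have hfreq' : ∃ᶠ r : ℝ in atTop, 1 - ε/2 <
        (volume (B ∩ sectorBall α (r + c))).toReal /
          (volume (sectorBall α (r + c))).toReal := by
      rw [frequently_atTop] at hfreq ⊢
      intro b
      obtain ⟨r, hr1, hr2⟩ := hfreq (b + c)
      refine ⟨r - c, by linarith, by simpa using hr2⟩
    have hqtend : Tendsto (fun r : ℝ => ((r+c)/r)^2) atTop (𝓝 1) := by
      have h0 : Tendsto (fun r : ℝ => c / r) atTop (𝓝 0) :=
        Tendsto.div_atTop tendsto_const_nhds tendsto_id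
      have h1 : Tendsto (fun r : ℝ => 1 + c / r) atTop (𝓝 1) := by
        simpa using tendsto_const_nhds.add h0
      have h2 : Tendsto (fun r : ℝ => (1 + c / r)^2) atTop (𝓝 1) := by
        simpa using h1.pow 2
      apply h2.congr'
      filter_upwards [eventually_gt_atTop (0:ℝ)] with r hr
      field_simp
    have hqev : ∀ᶠ r : ℝ in atTop, ((r+c)/r)^2 ≤ 2 :=
      hqtend.eventually_le_const (by norm_num)
    have hfinal : ∃ᶠ r in atTop, 1 - ε ≤
        (volume (B' ∩ sectorBall α r)).toReal / (volume (sectorBall α r)).toReal := by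
      apply (hfreq'.and_eventually ((eventually_gt_atTop (0:ℝ)).and hqev)).mono
      rintro r ⟨hfr, hr, hq2⟩
      have hrc : 0 < r + c := by linarith
      have hp := pointwise r hr
      have hfle := hle1 B (r + c) hrc
      have hqnn : 0 ≤ ((r+c)/r)^2 := sq_nonneg _
      nlinarith [hp]
    calc 1 - ε ≤ limsup (fun r => (volume (B' ∩ sectorBall α r)).toReal /
          (volume (sectorBall α r)).toReal) atTop :=
        le_limsup_of_frequently_le hfinal hbddB'
      _ = udens α B' := rfl
end Stmt6Aux

/-- The set of distributionally irregular vectors is invariant under the semigroup. -/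
theorem stmt_6 (α : ℝ) (hα : 0 < α) (hα' : α < Real.pi / 2)
    {𝕜 X : Type*} [NontriviallyNormedField 𝕜] [NormedAddCommGroup X] [NormedSpace 𝕜 X]
    [CompleteSpace X] (S : CZeroSemigroup α 𝕜 X)
    (x₀ : X) (hx₀ : DistIrregular S x₀) :
    ∀ t₀ ∈ sector α, DistIrregular S (S.T t₀ x₀) := by
  obtain ⟨A, B, hAsub, hBsub, hAmeas, hBmeas, hAud, hBud, hA0, hBtop⟩ := hx₀
  intro t₀ ht₀
  refine ⟨A, (fun z => z + t₀) ⁻¹' B ∩ sector α, hAsub, inter_subset_right, hAmeas,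
    (hBmeas.preimage (measurable_add_const t₀)).inter Stmt6.measurableSet_sector,
    hAud, Stmt6.udens_preimage_add hα hα' ht₀ hBud, ?_, ?_⟩
  · -- convergence to zero along A
    have hmemA : ∀ᶠ t in alongAbs A, t ∈ A := by
      unfold alongAbs; exact (eventually_principal.2 fun x hx => hx).filter_mono inf_le_right
    apply squeeze_zero' (g := fun t => ‖S.T t₀‖ * ‖S.T t x₀‖)
    · exact Eventually.of_forall fun t => norm_nonneg _
    · filter_upwards [hmemA] with t ht
      have hts : t ∈ sector α := hAsub ht
      have h1 : S.T (t + t₀) = (S.T t).comp (S.T t₀) := S.map_add' t hts t₀ ht₀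
      have h2 : S.T (t₀ + t) = (S.T t₀).comp (S.T t) := S.map_add' t₀ ht₀ t hts
      have h3 : S.T t (S.T t₀ x₀) = S.T t₀ (S.T t x₀) := by
        have h4 : (S.T t).comp (S.T t₀) = (S.T t₀).comp (S.T t) := by
          rw [← h1, ← h2, add_comm]
        have := congrArg (fun f : X →L[𝕜] X => f x₀) h4
        simpa using this
      rw [h3]
      exact (S.T t₀).le_opNorm _
    · simpa using hA0.const_mul ‖S.T t₀‖
  · -- divergence along B'
    have hmemB' : ∀ᶠ t in alongAbs ((fun z => z + t₀) ⁻¹' B ∩ sector α),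
        t ∈ (fun z => z + t₀) ⁻¹' B ∩ sector α := by
      unfold alongAbs; exact (eventually_principal.2 fun x hx => hx).filter_mono inf_le_right
    have habs : Tendsto (fun t : ℂ => ‖t‖)
        (alongAbs ((fun z => z + t₀) ⁻¹' B ∩ sector α)) atTop :=
      tendsto_comap.mono_left inf_le_left
    have hmap : Tendsto (fun s : ℂ => s + t₀)
        (alongAbs ((fun z => z + t₀) ⁻¹' B ∩ sector α)) (alongAbs B) := by
      simp only [alongAbs]
      rw [tendsto_inf]
      constructor
      · rw [tendsto_comap_iff]
        apply tendsto_atTop_mono' _ _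
          (tendsto_atTop_add_const_right _ (-‖t₀‖) habs)
        apply Eventually.of_forall
        intro s
        have h5 : ‖s‖ ≤ ‖s + t₀‖ + ‖t₀‖ := by
          have := norm_add_le (s + t₀) (-t₀)
          simpa using this
        simp only [Function.comp_apply]
        linarith
      · rw [tendsto_principal]
        filter_upwards [hmemB'] with s hs
        exact hs.1
    have hcomp : Tendsto (fun s : ℂ => ‖S.T (s + t₀) x₀‖)
        (alongAbs ((fun z => z + t₀) ⁻¹' B ∩ sector α)) atTop := hBtop.comp hmap
    apply hcomp.congr'
    filter_upwards [hmemB'] with s hs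
    have h1 : S.T (s + t₀) = (S.T s).comp (S.T t₀) := S.map_add' s hs.2 t₀ ht₀
    have := congrArg (fun f : X →L[𝕜] X => ‖f x₀‖) h1
    simpa using this
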